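/- Let p = N(μ₁, v₁) and q = N(μ₂, v₂) be real Gaussian measures with v₁, v₂ > 0, write σ₁ = √v₁ and σ₂ = √v₂, and let L : ℝ → ℝ be a β-Lipschitz function that is integrable with respect to both p and q. Then |∫ L dp − ∫ L dq| ≤ β · √((μ₁ − μ₂)² + (σ₁ − σ₂)²). -/

import Mathlib

open MeasureTheory ProbabilityTheory
open scoped NNReal ENNReal

open Real


/-- Integral against standard gaussian as a Lebesgue integral against the pdf. -/
lemma gauss_integral_eq (g : ℝ → ℝ) :
    ∫ z, g z ∂(gaussianReal 0 1) = ∫ z, gaussianPDFReal 0 1 z * g z := by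
  rw [gaussianReal_of_var_ne_zero 0 one_ne_zero]
  have h : gaussianPDF 0 1 = fun x => ((Real.toNNReal (gaussianPDFReal 0 1 x) : ℝ≥0) : ℝ≥0∞) :=
    rfl
  rw [h, integral_withDensity_eq_integral_smul
    ((measurable_gaussianPDFReal 0 1).real_toNNReal) g]
  congr 1
  funext z
  rw [NNReal.smul_def, Real.coe_toNNReal _ (gaussianPDFReal_nonneg 0 1 z)]
  rfl

lemma gauss_integrable_iff (g : ℝ → ℝ) :
    Integrable g (gaussianReal 0 1) ↔
      Integrable (fun z => gaussianPDFReal 0 1 z * g z) := by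
  rw [gaussianReal_of_var_ne_zero 0 one_ne_zero,
    integrable_withDensity_iff (measurable_gaussianPDF 0 1)
      (Filter.Eventually.of_forall fun x => ENNReal.ofReal_lt_top)]
  constructor <;> intro h <;> refine h.congr (Filter.Eventually.of_forall fun x => ?_)
  · simp only [ProbabilityTheory.gaussianPDF.eq_1, ENNReal.toReal_ofReal (gaussianPDFReal_nonneg 0 1 x), mul_comm]
  · simp only [ProbabilityTheory.gaussianPDF.eq_1, ENNReal.toReal_ofReal (gaussianPDFReal_nonneg 0 1 x), mul_comm]

lemma gaussianPDFReal_zero_one (z : ℝ) :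
    gaussianPDFReal 0 1 z = (Real.sqrt (2 * π))⁻¹ * Real.exp (-(1/2) * z ^ 2) := by
  simp only [gaussianPDFReal, NNReal.coe_one, mul_one, sub_zero]
  ring_nf

lemma gauss_integrable_id : Integrable (fun z : ℝ => z) (gaussianReal 0 1) := by
  rw [gauss_integrable_iff]
  have h := (integrable_mul_exp_neg_mul_sq (b := 1/2) (by norm_num)).const_mul (Real.sqrt (2 * π))⁻¹
  refine h.congr (Filter.Eventually.of_forall fun z => ?_)
  simp only [gaussianPDFReal_zero_one]
  ring

lemma gauss_integrable_sq : Integrable (fun z : ℝ => z ^ 2) (gaussianReal 0 1) := by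
  rw [gauss_integrable_iff]
  have h := (integrable_rpow_mul_exp_neg_mul_sq (b := 1/2) (by norm_num)
    (s := 2) (by norm_num)).const_mul (Real.sqrt (2 * π))⁻¹
  refine h.congr (Filter.Eventually.of_forall fun z => ?_)
  simp only [gaussianPDFReal_zero_one, Real.rpow_two]
  ring

lemma gauss_integral_id : ∫ z, z ∂(gaussianReal 0 1) = 0 := by
  rw [gauss_integral_eq]
  set g : ℝ → ℝ := fun z => gaussianPDFReal 0 1 z * z with hg
  have hodd : ∀ x, g (-x) = - g x := by
    intro x
    simp only [hg, gaussianPDFReal_zero_one, neg_sq, mul_neg]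
  have h : ∫ x, g (-x) = ∫ x, g x := integral_neg_eq_self g _
  simp_rw [hodd, integral_neg] at h
  linarith

lemma gauss_integral_sq : ∫ z, z ^ 2 ∂(gaussianReal 0 1) = 1 := by
  rw [gauss_integral_eq]
  have h1 : ∀ z : ℝ, gaussianPDFReal 0 1 z * z ^ 2
      = (Real.sqrt (2 * π))⁻¹ * (z ^ 2 * Real.exp (-(1/2) * z ^ 2)) := by
    intro z; rw [gaussianPDFReal_zero_one]; ring
  simp_rw [h1]
  rw [integral_const_mul]
  set f : ℝ → ℝ := fun x => x ^ 2 * Real.exp (-(1/2) * x ^ 2) with hf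
  have h2 : ∀ z : ℝ, f |z| = f z := by
    intro z; simp only [hf, sq_abs]
  have h3 : ∫ z, f z = 2 * ∫ z in Set.Ioi (0:ℝ), f z := by
    rw [← integral_comp_abs (f := f)]
    exact integral_congr_ae (Filter.Eventually.of_forall fun x => (h2 x).symm)
  have h4 : ∫ z in Set.Ioi (0:ℝ), f z
      = (1/2 : ℝ) ^ (-((2:ℝ) + 1) / 2) * (1 / 2) * Real.Gamma (((2:ℝ) + 1) / 2) := by
    rw [← integral_rpow_mul_exp_neg_mul_rpow (p := 2) (q := 2) (b := 1/2)
      (by norm_num) (by norm_num) (by norm_num)]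
    refine setIntegral_congr_fun measurableSet_Ioi fun x _ => ?_
    rw [hf, Real.rpow_two]
  have hgamma : Real.Gamma (((2:ℝ) + 1) / 2) = Real.sqrt π / 2 := by
    have : ((2:ℝ) + 1) / 2 = 1/2 + 1 := by norm_num
    rw [this, Real.Gamma_add_one (by norm_num), Real.Gamma_one_half_eq]
    ring
  have hr : (1/2 : ℝ) ^ (-((2:ℝ) + 1) / 2) = 2 * Real.sqrt 2 := by
    have e1 : -((2:ℝ) + 1) / 2 = -(3/2) := by norm_num
    rw [e1, Real.rpow_neg (by norm_num), one_div, Real.inv_rpow (by norm_num), inv_inv]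
    have e2 : (3/2 : ℝ) = 1 + 1/2 := by norm_num
    rw [e2, Real.rpow_add (by norm_num), Real.rpow_one, ← Real.sqrt_eq_rpow]
  rw [h3, h4, hgamma, hr, Real.sqrt_mul (by norm_num)]
  have hs2 : Real.sqrt 2 * Real.sqrt 2 = 2 := Real.mul_self_sqrt (by norm_num)
  have hπ : (0:ℝ) < Real.sqrt π := Real.sqrt_pos.mpr Real.pi_pos
  have h2 : (0:ℝ) < Real.sqrt 2 := Real.sqrt_pos.mpr (by norm_num)
  field_simp

lemma gauss_map_affine (μ : ℝ) (v : ℝ≥0) (hv : v ≠ 0) :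
    (gaussianReal 0 1).map (fun z => Real.sqrt v * z + μ) = gaussianReal μ v := by
  have hfun : (fun z : ℝ => Real.sqrt v * z + μ)
      = (fun x => x + μ) ∘ (fun z => Real.sqrt v * z) := rfl
  rw [hfun, ← Measure.map_map (measurable_add_const μ) (measurable_const_mul _)]
  have h1 : (gaussianReal 0 1).map (fun z => Real.sqrt v * z)
      = gaussianReal 0 v := by
    have := gaussianReal_map_const_mul (μ := 0) (v := 1) (Real.sqrt v)
    simp only [mul_zero] at this
    convert this using 2
    ext
    simp [Real.sq_sqrt v.2]
  rw [show (fun z : ℝ => Real.sqrt (v : ℝ) * z) = (Real.sqrt (v : ℝ) * ·) from rfl, h1]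
  rw [show (fun x : ℝ => x + μ) = (· + μ) from rfl, gaussianReal_map_add_const μ, zero_add]

lemma gauss_transfer (μ : ℝ) (v : ℝ≥0) (hv : v ≠ 0) {L : ℝ → ℝ}
    (hLp : Integrable L (gaussianReal μ v)) :
    (∫ x, L x ∂gaussianReal μ v) = (∫ z, L (Real.sqrt v * z + μ) ∂gaussianReal 0 1)
      ∧ Integrable (fun z => L (Real.sqrt v * z + μ)) (gaussianReal 0 1) := by
  have hm : Measurable (fun z : ℝ => Real.sqrt v * z + μ) :=
    (measurable_id.const_mul _).add_const μ
  have hmap := gauss_map_affine μ v hv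
  constructor
  · rw [← hmap] at hLp ⊢
    exact integral_map hm.aemeasurable hLp.1
  · rw [← hmap] at hLp
    exact (integrable_map_measure hLp.1 hm.aemeasurable).mp hLp

lemma gauss_abs_linear_le (a b : ℝ) :
    ∫ z, |a * z + b| ∂(gaussianReal 0 1) ≤ Real.sqrt (a ^ 2 + b ^ 2) := by
  set γ := gaussianReal 0 1
  have hint_sq : Integrable (fun z => (a * z + b) ^ 2) γ := by
    have h : Integrable (fun z => a ^ 2 * z ^ 2 + (2 * a * b * z + b ^ 2)) γ :=
      (gauss_integrable_sq.const_mul _).add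
        ((gauss_integrable_id.const_mul _).add (integrable_const _))
    refine h.congr (Filter.Eventually.of_forall fun z => ?_); ring
  have hmem : MemLp (fun z => a * z + b) 2 γ := by
    refine (memLp_two_iff_integrable_sq ?_).mpr hint_sq
    exact ((measurable_id.const_mul _).add_const _).aestronglyMeasurable
  have hone : MemLp (fun _ : ℝ => (1:ℝ)) 2 γ := memLp_const 1
  have hpq : Real.HolderConjugate 2 2 := Real.holderConjugate_iff.mpr ⟨one_lt_two, by norm_num⟩
  have h2e : ENNReal.ofReal (2:ℝ) = 2 := by
    rw [ENNReal.ofReal_ofNat]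
  have hcs := integral_mul_norm_le_Lp_mul_Lq (μ := γ) hpq (h2e ▸ hmem) (h2e ▸ hone)
  have hsq_val : ∫ z, (a * z + b) ^ 2 ∂γ = a ^ 2 + b ^ 2 := by
    have e : (fun z : ℝ => (a * z + b) ^ 2)
        = fun z => a ^ 2 * z ^ 2 + (2 * a * b * z + b ^ 2) := by funext z; ring
    have i1 : Integrable (fun z : ℝ => a ^ 2 * z ^ 2) γ := gauss_integrable_sq.const_mul _
    have i2 : Integrable (fun z : ℝ => 2 * a * b * z) γ := gauss_integrable_id.const_mul _
    have i3 : Integrable (fun _ : ℝ => b ^ 2) γ := integrable_const _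
    have i23 : Integrable (fun z : ℝ => 2 * a * b * z + b ^ 2) γ := i2.add i3
    rw [e, integral_add i1 i23, integral_add i2 i3,
      integral_const_mul, integral_const_mul, gauss_integral_id, gauss_integral_sq,
      integral_const]
    simp [γ]
  calc ∫ z, |a * z + b| ∂γ = ∫ z, ‖a * z + b‖ * ‖(1:ℝ)‖ ∂γ := by
        simp [Real.norm_eq_abs]
    _ ≤ (∫ z, ‖a * z + b‖ ^ (2:ℝ) ∂γ) ^ (1/(2:ℝ)) * (∫ _, ‖(1:ℝ)‖ ^ (2:ℝ) ∂γ) ^ (1/(2:ℝ)) := hcs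
    _ = Real.sqrt (a ^ 2 + b ^ 2) := by
        have e1 : ∀ z : ℝ, ‖a * z + b‖ ^ (2:ℝ) = (a * z + b) ^ 2 := fun z => by
          rw [Real.rpow_two, Real.norm_eq_abs, sq_abs]
        simp_rw [e1, hsq_val]
        have : ∫ _, ‖(1:ℝ)‖ ^ (2:ℝ) ∂γ = 1 := by
          simp [γ]
        rw [this, Real.one_rpow, mul_one, Real.sqrt_eq_rpow]

/-- For Gaussians `p = N(μ₁, v₁)` and `q = N(μ₂, v₂)` with `σᵢ = √vᵢ`, and a `β`-Lipschitz
function `L` integrable with respect to both, one has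
`|∫ L dp − ∫ L dq| ≤ β · √((μ₁ − μ₂)² + (σ₁ − σ₂)²)`. -/
theorem lipschitz_integral_diff_le_gaussian_wasserstein
    (μ₁ μ₂ : ℝ) (v₁ v₂ : ℝ≥0) (hv₁ : 0 < v₁) (hv₂ : 0 < v₂)
    (σ₁ σ₂ : ℝ) (hσ₁ : σ₁ = Real.sqrt v₁) (hσ₂ : σ₂ = Real.sqrt v₂)
    (β : ℝ) (L : ℝ → ℝ)
    (hL : ∀ x y, |L x - L y| ≤ β * |x - y|)
    (hLp : Integrable L (gaussianReal μ₁ v₁))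
    (hLq : Integrable L (gaussianReal μ₂ v₂)) :
    |(∫ x, L x ∂gaussianReal μ₁ v₁) - ∫ x, L x ∂gaussianReal μ₂ v₂| ≤
      β * Real.sqrt ((μ₁ - μ₂) ^ 2 + (σ₁ - σ₂) ^ 2) := by
  subst hσ₁ hσ₂
  set γ := gaussianReal 0 1 with hγ
  have hβ : 0 ≤ β := by
    have h := hL 0 1
    simp only [zero_sub, abs_neg, abs_one, mul_one] at h
    exact le_trans (abs_nonneg _) h
  obtain ⟨e1, h1⟩ := gauss_transfer μ₁ v₁ hv₁.ne' hLp
  obtain ⟨e2, h2⟩ := gauss_transfer μ₂ v₂ hv₂.ne' hLq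
  set a := Real.sqrt v₁ - Real.sqrt v₂ with ha
  set b := μ₁ - μ₂ with hb
  have hlin : Integrable (fun z => |a * z + b|) γ :=
    ((gauss_integrable_id.const_mul a).add (integrable_const b)).abs
  have habs : Integrable (fun z => β * |a * z + b|) γ := hlin.const_mul β
  rw [e1, e2, ← integral_sub h1 h2]
  calc |∫ z, (L (Real.sqrt v₁ * z + μ₁) - L (Real.sqrt v₂ * z + μ₂)) ∂γ|
      ≤ ∫ z, |L (Real.sqrt v₁ * z + μ₁) - L (Real.sqrt v₂ * z + μ₂)| ∂γ :=
      by simpa [Real.norm_eq_abs] using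
        norm_integral_le_integral_norm (μ := γ)
          (fun z => L (Real.sqrt v₁ * z + μ₁) - L (Real.sqrt v₂ * z + μ₂))
    _ ≤ ∫ z, β * |a * z + b| ∂γ := by
        refine integral_mono (h1.sub h2).abs habs fun z => ?_
        have h := hL (Real.sqrt v₁ * z + μ₁) (Real.sqrt v₂ * z + μ₂)
        have e : (Real.sqrt v₁ * z + μ₁) - (Real.sqrt v₂ * z + μ₂) = a * z + b := by
          rw [ha, hb]; ring
        rwa [e] at h
    _ = β * ∫ z, |a * z + b| ∂γ := integral_const_mul β _
    _ ≤ β * Real.sqrt (a ^ 2 + b ^ 2) :=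
        mul_le_mul_of_nonneg_left (gauss_abs_linear_le a b) hβ
    _ = β * Real.sqrt ((μ₁ - μ₂) ^ 2 + (Real.sqrt v₁ - Real.sqrt v₂) ^ 2) := by
        rw [add_comm]
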